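/- Let g : ℝ → ℝ be continuous, nondecreasing, and satisfy the high-order majorization property with power p > 1 (for all s, t ∈ ℝ and λ ∈ [0,1]: λg(s) + (1−λ)g(t) ≤ g(λs + (1−λ)t) + c|s − t|^p for some c > 0). Let φ : ℝⁿ → ℝ be concave and ν-Hölder continuous with constant L_ν and ν ∈ (0,1]. Then the composition x ↦ g(φ(x)) satisfies, for all x, y ∈ ℝⁿ and λ ∈ [0,1]: λ g(φ(x)) + (1−λ) g(φ(y)) ≤ g(φ(λx + (1−λ)y)) + c L_ν^p ‖x − y‖^(pν). -/
import Mathlib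


theorem stmt_5 {n : ℕ} (g : ℝ → ℝ) (φ : EuclideanSpace ℝ (Fin n) → ℝ)
    (p c ν L : ℝ) (hp : 1 < p) (hc : 0 < c) (hν0 : 0 < ν) (hν1 : ν ≤ 1) (hL : 0 < L)
    (hgcont : Continuous g) (hgmono : Monotone g)
    (hgmaj : ∀ s t l : ℝ, 0 ≤ l → l ≤ 1 →
      l * g s + (1 - l) * g t ≤ g (l * s + (1 - l) * t) + c * |s - t| ^ p)
    (hconc : ConcaveOn ℝ Set.univ φ)
    (hHolder : ∀ x y, |φ x - φ y| ≤ L * ‖x - y‖ ^ ν) :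
    ∀ (x y : EuclideanSpace ℝ (Fin n)) (l : ℝ), 0 ≤ l → l ≤ 1 →
      l * g (φ x) + (1 - l) * g (φ y) ≤
        g (φ (l • x + (1 - l) • y)) + c * L ^ p * ‖x - y‖ ^ (p * ν) := by
  intro x y l hl0 hl1
  have h1 := hgmaj (φ x) (φ y) l hl0 hl1
  have hconc' : l * φ x + (1 - l) * φ y ≤ φ (l • x + (1 - l) • y) := by
    have := hconc.2 (Set.mem_univ x) (Set.mem_univ y) hl0
      (by linarith : (0:ℝ) ≤ 1 - l) (by ring : l + (1 - l) = 1)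
    simpa [smul_eq_mul] using this
  have h2 : g (l * φ x + (1 - l) * φ y) ≤ g (φ (l • x + (1 - l) • y)) := hgmono hconc'
  have hnorm : (0:ℝ) ≤ ‖x - y‖ ^ ν := Real.rpow_nonneg (norm_nonneg _) _
  have h3 : |φ x - φ y| ^ p ≤ L ^ p * ‖x - y‖ ^ (p * ν) := by
    calc |φ x - φ y| ^ p ≤ (L * ‖x - y‖ ^ ν) ^ p :=
          Real.rpow_le_rpow (abs_nonneg _) (hHolder x y) (by linarith)
      _ = L ^ p * (‖x - y‖ ^ ν) ^ p := Real.mul_rpow hL.le hnorm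
      _ = L ^ p * ‖x - y‖ ^ (ν * p) := by
          rw [← Real.rpow_mul (norm_nonneg _)]
      _ = L ^ p * ‖x - y‖ ^ (p * ν) := by rw [mul_comm ν p]
  calc l * g (φ x) + (1 - l) * g (φ y)
      ≤ g (l * φ x + (1 - l) * φ y) + c * |φ x - φ y| ^ p := h1
    _ ≤ g (φ (l • x + (1 - l) • y)) + c * (L ^ p * ‖x - y‖ ^ (p * ν)) := by
        gcongr
    _ = g (φ (l • x + (1 - l) • y)) + c * L ^ p * ‖x - y‖ ^ (p * ν) := by ring
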